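/- Let s ≥ 2 and 1 ≤ d ≤ s. For any nonzero square-free polynomial g of degree d in F_q[t_1,...,t_s], the number of zeroes of g in the affine torus T = (F_q^*)^s is at most (q-1)^s - (q-2)^d (q-1)^{s-d}. -/

import Mathlib

open MvPolynomial Finset

/-- A polynomial is square-free if every variable occurs in each of its monomials
with exponent at most 1. -/
def MvPolynomial.IsSquareFreePoly {σ R : Type*} [CommSemiring R]
    (p : MvPolynomial σ R) : Prop :=
  ∀ m ∈ p.support, ∀ i, m i ≤ 1

section helpers
variable {F : Type*} [Field F] [Fintype F]

lemma card_filter_cons {n : ℕ} (P : (Fin (n+1) → F) → Prop) [DecidablePred P]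
    [∀ xs : Fin n → F, DecidablePred fun x0 : F => P (Fin.cons x0 xs)] :
    (Finset.univ.filter P).card
      = ∑ xs : Fin n → F, (Finset.univ.filter fun x0 : F => P (Fin.cons x0 xs)).card := by
  calc (Finset.univ.filter P).card
      = ∑ x : Fin (n+1) → F, if P x then 1 else 0 := Finset.card_filter _ _
    _ = ∑ p : (Fin n → F) × F, if P (Fin.cons p.2 p.1) then 1 else 0 := by
        apply Fintype.sum_equiv ((Fin.consEquiv fun _ => F).symm.trans (Equiv.prodComm _ _))
        intro x
        simp [Fin.cons_self_tail]
    _ = ∑ xs : Fin n → F, ∑ x0 : F, if P (Fin.cons x0 xs) then 1 else 0 :=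
        Fintype.sum_prod_type _
    _ = _ := Finset.sum_congr rfl fun xs _ => (Finset.card_filter _ _).symm

open Classical in
lemma card_ne_zero' : (Finset.univ.filter fun x : F => x ≠ 0).card = Fintype.card F - 1 := by
  rw [Finset.filter_ne']
  simp [Finset.card_erase_of_mem]

open Classical in
lemma card_two_avoid (a b : F) :
    Fintype.card F - 2 ≤ (Finset.univ.filter fun x : F => x ≠ a ∧ x ≠ b).card := by
  have h1 : (Finset.univ.filter fun x : F => ¬(x ≠ a ∧ x ≠ b)).card ≤ 2 := by
    have hsub : (Finset.univ.filter fun x : F => ¬(x ≠ a ∧ x ≠ b)) ⊆ {a, b} := by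
      intro x hx
      simp only [Finset.mem_filter, not_and_or, not_not] at hx
      simp only [Finset.mem_insert, Finset.mem_singleton]
      tauto
    calc _ ≤ ({a, b} : Finset F).card := Finset.card_le_card hsub
    _ ≤ 2 := (Finset.card_insert_le _ _).trans (by simp)
  have h2 := Finset.card_filter_add_card_filter_not
    (s := (Finset.univ : Finset F)) (p := fun x : F => x ≠ a ∧ x ≠ b)
  have hc : (Finset.univ : Finset F).card = Fintype.card F := Finset.card_univ
  omega

lemma eval_cons_eq {n : ℕ} (g : MvPolynomial (Fin (n+1)) F) (h : degreeOf 0 g ≤ 1)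
    (x0 : F) (xs : Fin n → F) :
    eval (Fin.cons x0 xs) g =
      eval xs ((finSuccEquiv F n g).coeff 1) * x0 + eval xs ((finSuccEquiv F n g).coeff 0) := by
  rw [eval_eq_eval_mv_eval']
  have hdeg : ((finSuccEquiv F n g).map (eval xs)).natDegree < 2 := by
    have h1 : ((finSuccEquiv F n g).map (eval xs)).natDegree ≤ (finSuccEquiv F n g).natDegree :=
      Polynomial.natDegree_map_le
    rw [natDegree_finSuccEquiv] at h1
    omega
  rw [Polynomial.eval_eq_sum_range' hdeg]
  simp [Finset.sum_range_succ, Polynomial.coeff_map]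
  ring

lemma sf_coeff {n : ℕ} {g : MvPolynomial (Fin (n+1)) F} (hsf : g.IsSquareFreePoly) (i : ℕ) :
    ((finSuccEquiv F n g).coeff i).IsSquareFreePoly := by
  intro m hm j
  have hmem := mem_support_coeff_finSuccEquiv.mp hm
  have := hsf _ hmem j.succ
  rwa [Finsupp.cons_succ] at this

lemma sf_totalDegree_le {n : ℕ} {g : MvPolynomial (Fin n) F} (hsf : g.IsSquareFreePoly) :
    g.totalDegree ≤ n := by
  rw [totalDegree]
  apply Finset.sup_le
  intro m hm
  calc m.sum (fun _ e => e) = ∑ i ∈ m.support, m i := rfl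
    _ ≤ ∑ _i ∈ m.support, 1 := Finset.sum_le_sum fun i _ => hsf m hm i
    _ = m.support.card := by simp
    _ ≤ (Finset.univ : Finset (Fin n)).card := Finset.card_le_card (Finset.subset_univ _)
    _ = n := by simp

lemma pow_mono_sub (a b : ℕ) (hab : a ≤ b) {d' d m : ℕ} (h1 : d' ≤ d) (h2 : d ≤ m) :
    a ^ d * b ^ (m - d) ≤ a ^ d' * b ^ (m - d') := by
  have e1 : a ^ d * b ^ (m - d) = a ^ d' * (a ^ (d - d') * b ^ (m - d)) := by
    rw [← mul_assoc, ← pow_add]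
    congr 2
    omega
  rw [e1]
  apply Nat.mul_le_mul_left
  calc a ^ (d - d') * b ^ (m - d) ≤ b ^ (d - d') * b ^ (m - d) :=
        Nat.mul_le_mul_right _ (Nat.pow_le_pow_left hab _)
    _ = b ^ (m - d') := by rw [← pow_add]; congr 1; omega

lemma poly_eq_zero_of_coeffs {R : Type*} [CommRing R] {p : Polynomial R}
    (hd : p.natDegree ≤ 1) (h0 : p.coeff 0 = 0) (h1 : p.coeff 1 = 0) : p = 0 := by
  ext i
  match i with
  | 0 => simpa using h0
  | 1 => simpa using h1
  | (k+2) =>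
    have : p.natDegree < k + 2 := by omega
    simp [Polynomial.coeff_eq_zero_of_natDegree_lt this]

open Classical in
lemma key_nonzero_count :
    ∀ (n d : ℕ), d ≤ n → ∀ g : MvPolynomial (Fin n) F, g ≠ 0 →
      g.IsSquareFreePoly → g.totalDegree ≤ d →
      (Fintype.card F - 2) ^ d * (Fintype.card F - 1) ^ (n - d) ≤
        (Finset.univ.filter fun x : Fin n → F => (∀ i, x i ≠ 0) ∧ eval x g ≠ 0).card := by
  intro n
  induction n with
  | zero =>
    intro d hdn g hg hsf hdeg
    interval_cases d
    simp only [pow_zero, one_mul, Nat.zero_sub, pow_zero]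
    rw [Nat.one_le_iff_ne_zero, ← Nat.pos_iff_ne_zero, Finset.card_pos]
    obtain ⟨c, rfl⟩ := MvPolynomial.C_surjective (Fin 0) g
    refine ⟨fun i => i.elim0, ?_⟩
    simp only [Finset.mem_filter, Finset.mem_univ, true_and]
    constructor
    · intro i; exact i.elim0
    · simpa using fun h => hg (by rw [h, map_zero])
  | succ n ih =>
    intro d hdn g hg hsf hdeg
    set q := Fintype.card F with hq
    set g1 := (finSuccEquiv F n g).coeff 1 with hg1def
    set g0 := (finSuccEquiv F n g).coeff 0 with hg0def
    have hdeg0 : degreeOf 0 g ≤ 1 := by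
      rw [degreeOf_le_iff]
      intro m hm
      exact hsf m hm 0
    have hpdeg : (finSuccEquiv F n g).natDegree ≤ 1 := by
      rw [natDegree_finSuccEquiv]; exact hdeg0
    have heval : ∀ (x0 : F) (xs : Fin n → F),
        eval (Fin.cons x0 xs) g = eval xs g1 * x0 + eval xs g0 :=
      fun x0 xs => eval_cons_eq g hdeg0 x0 xs
    by_cases hg1 : g1 ≠ 0
    · -- case: the coefficient of x0 is a nonzero polynomial
      have hd1 : g1.totalDegree + 1 ≤ d :=
        le_trans (totalDegree_coeff_finSuccEquiv_add_le g 1 hg1) hdeg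
      have hd1' : 1 ≤ d := le_trans (by omega) hd1
      have hih := ih (d-1) (by omega) g1 hg1 (sf_coeff hsf 1) (by omega)
      set S := Finset.univ.filter fun xs : Fin n → F => (∀ i, xs i ≠ 0) ∧ eval xs g1 ≠ 0 with hS
      have hfiber : ∀ xs ∈ S, q - 2 ≤
          (Finset.univ.filter fun x0 : F =>
            (∀ i, (Fin.cons x0 xs : Fin (n+1) → F) i ≠ 0) ∧ eval (Fin.cons x0 xs) g ≠ 0).card := by
        intro xs hxs
        rw [hS, Finset.mem_filter] at hxs
        obtain ⟨-, hxs1, hxs2⟩ := hxs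
        refine le_trans (card_two_avoid 0 (-(eval xs g0) * (eval xs g1)⁻¹)) ?_
        apply Finset.card_le_card
        intro x0 hx0
        simp only [Finset.mem_filter, Finset.mem_univ, true_and] at hx0 ⊢
        obtain ⟨hne0, hne1⟩ := hx0
        constructor
        · intro i
          refine Fin.cases ?_ ?_ i
          · simpa using hne0
          · intro j; simpa using hxs1 j
        · rw [heval x0 xs]
          intro habs
          apply hne1
          field_simp at habs ⊢
          rw [mul_comm] at habs
          rw [eq_comm, neg_eq_iff_add_eq_zero]
          linear_combination habs
      calc (q-2)^d * (q-1)^(n+1-d)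
          = ((q-2)^(d-1) * (q-1)^(n-(d-1))) * (q-2) := by
            rw [mul_assoc, mul_comm ((q-1)^(n-(d-1))), ← mul_assoc, ← pow_succ]
            congr 2 <;> omega
        _ ≤ S.card * (q-2) := Nat.mul_le_mul_right _ hih
        _ = ∑ _xs ∈ S, (q-2) := by rw [Finset.sum_const, smul_eq_mul]
        _ ≤ ∑ xs ∈ S, (Finset.univ.filter fun x0 : F =>
              (∀ i, (Fin.cons x0 xs : Fin (n+1) → F) i ≠ 0) ∧
                eval (Fin.cons x0 xs) g ≠ 0).card := Finset.sum_le_sum hfiber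
        _ ≤ ∑ xs : Fin n → F, (Finset.univ.filter fun x0 : F =>
              (∀ i, (Fin.cons x0 xs : Fin (n+1) → F) i ≠ 0) ∧
                eval (Fin.cons x0 xs) g ≠ 0).card :=
            Finset.sum_le_sum_of_subset (Finset.subset_univ S)
        _ = _ := (card_filter_cons (fun x : Fin (n+1) → F =>
              (∀ i, x i ≠ 0) ∧ eval x g ≠ 0)).symm
    · -- case: g does not involve the variable 0
      push_neg at hg1
      have hg0 : g0 ≠ 0 := by
        intro h0
        apply hg
        have : finSuccEquiv F n g = 0 := poly_eq_zero_of_coeffs hpdeg h0 hg1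
        exact (EmbeddingLike.map_eq_zero_iff).mp this
      have hevals : ∀ x0 xs, eval (Fin.cons x0 xs : Fin (n+1) → F) g = eval xs g0 := by
        intro x0 xs
        rw [heval x0 xs, hg1]
        simp
      have hd0 : g0.totalDegree ≤ min d n := by
        refine le_min ?_ (sf_totalDegree_le (sf_coeff hsf 0))
        simpa using le_trans (totalDegree_coeff_finSuccEquiv_add_le g 0 hg0) hdeg
      have hih := ih (min d n) (min_le_right _ _) g0 hg0 (sf_coeff hsf 0) hd0
      set S := Finset.univ.filter fun xs : Fin n → F => (∀ i, xs i ≠ 0) ∧ eval xs g0 ≠ 0 with hS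
      have hfiber : ∀ xs ∈ S, q - 1 ≤
          (Finset.univ.filter fun x0 : F =>
            (∀ i, (Fin.cons x0 xs : Fin (n+1) → F) i ≠ 0) ∧ eval (Fin.cons x0 xs) g ≠ 0).card := by
        intro xs hxs
        rw [hS, Finset.mem_filter] at hxs
        obtain ⟨-, hxs1, hxs2⟩ := hxs
        rw [← card_ne_zero']
        apply Finset.card_le_card
        intro x0 hx0
        simp only [Finset.mem_filter, Finset.mem_univ, true_and] at hx0 ⊢
        constructor
        · intro i
          refine Fin.cases ?_ ?_ i
          · simpa using hx0
          · intro j; simpa using hxs1 j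
        · rw [hevals x0 xs]; exact hxs2
      calc (q-2)^d * (q-1)^(n+1-d)
          ≤ (q-2)^(min d n) * (q-1)^(n+1-(min d n)) :=
            pow_mono_sub _ _ (by omega) (min_le_left _ _) (by omega)
        _ = ((q-2)^(min d n) * (q-1)^(n-(min d n))) * (q-1) := by
            rw [mul_assoc, ← pow_succ]
            congr 2
            have := min_le_right d n
            omega
        _ ≤ S.card * (q-1) := Nat.mul_le_mul_right _ hih
        _ = ∑ _xs ∈ S, (q-1) := by rw [Finset.sum_const, smul_eq_mul]
        _ ≤ ∑ xs ∈ S, (Finset.univ.filter fun x0 : F =>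
              (∀ i, (Fin.cons x0 xs : Fin (n+1) → F) i ≠ 0) ∧
                eval (Fin.cons x0 xs) g ≠ 0).card := Finset.sum_le_sum hfiber
        _ ≤ ∑ xs : Fin n → F, (Finset.univ.filter fun x0 : F =>
              (∀ i, (Fin.cons x0 xs : Fin (n+1) → F) i ≠ 0) ∧
                eval (Fin.cons x0 xs) g ≠ 0).card :=
            Finset.sum_le_sum_of_subset (Finset.subset_univ S)
        _ = _ := (card_filter_cons (fun x : Fin (n+1) → F =>
              (∀ i, x i ≠ 0) ∧ eval x g ≠ 0)).symm


open Classical in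
lemma torus_card (n : ℕ) :
    (Finset.univ.filter fun x : Fin n → F => ∀ i, x i ≠ 0).card
      = (Fintype.card F - 1) ^ n := by
  induction n with
  | zero =>
    rw [pow_zero]
    rw [Finset.filter_true_of_mem (fun x _ => fun i => i.elim0)]
    simp
  | succ n ih =>
    rw [card_filter_cons (fun x : Fin (n+1) → F => ∀ i, x i ≠ 0)]
    have hfib : ∀ xs : Fin n → F,
        (Finset.univ.filter fun x0 : F => ∀ i, (Fin.cons x0 xs : Fin (n+1) → F) i ≠ 0).card
          = if (∀ j, xs j ≠ 0) then Fintype.card F - 1 else 0 := by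
      intro xs
      split_ifs with h
      · rw [← card_ne_zero']
        congr 1
        ext x0
        simp only [Finset.mem_filter, Finset.mem_univ, true_and]
        constructor
        · intro hx; simpa using hx 0
        · intro hx i
          refine Fin.cases ?_ ?_ i
          · simpa using hx
          · intro j; simpa using h j
      · rw [Finset.card_eq_zero, Finset.filter_eq_empty_iff]
        intro x0 _
        push_neg at h ⊢
        obtain ⟨j, hj⟩ := h
        exact ⟨j.succ, by simpa using hj⟩
    calc ∑ xs : Fin n → F, (Finset.univ.filter fun x0 : F =>
            ∀ i, (Fin.cons x0 xs : Fin (n+1) → F) i ≠ 0).card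
        = ∑ xs : Fin n → F, if (∀ j, xs j ≠ 0) then Fintype.card F - 1 else 0 :=
          Finset.sum_congr rfl fun xs _ => hfib xs
      _ = ∑ _xs ∈ Finset.univ.filter fun xs : Fin n → F => ∀ j, xs j ≠ 0,
            (Fintype.card F - 1) := (Finset.sum_filter _ _).symm
      _ = (Fintype.card F - 1) ^ n * (Fintype.card F - 1) := by
          rw [Finset.sum_const, smul_eq_mul, ih]
      _ = (Fintype.card F - 1) ^ (n+1) := by rw [pow_succ]


end helpers

theorem zeroes_in_torus_of_squarefree
    {F : Type*} [Field F] [Fintype F] {q s d : ℕ} (hq : Fintype.card F = q)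
    (hs : 2 ≤ s) (hd1 : 1 ≤ d) (hds : d ≤ s)
    (g : MvPolynomial (Fin s) F) (hg : g ≠ 0)
    (hsf : g.IsSquareFreePoly) (hdeg : g.totalDegree = d) :
    Set.ncard {x : Fin s → F | (∀ i, x i ≠ 0) ∧ eval x g = 0} ≤
      (q - 1) ^ s - (q - 2) ^ d * (q - 1) ^ (s - d) := by
  classical
  subst hq
  have hset : {x : Fin s → F | (∀ i, x i ≠ 0) ∧ eval x g = 0}
      = ↑(Finset.univ.filter fun x : Fin s → F => (∀ i, x i ≠ 0) ∧ eval x g = 0) := by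
    ext x; simp
  rw [hset, Set.ncard_coe_finset]
  have hsplit : (Finset.univ.filter fun x : Fin s → F => (∀ i, x i ≠ 0) ∧ eval x g = 0).card
      + (Finset.univ.filter fun x : Fin s → F => (∀ i, x i ≠ 0) ∧ eval x g ≠ 0).card
      = (Finset.univ.filter fun x : Fin s → F => ∀ i, x i ≠ 0).card := by
    have h1 : ∀ (p : (Fin s → F) → Prop) [DecidablePred p],
        (Finset.univ.filter fun x : Fin s → F => (∀ i, x i ≠ 0) ∧ p x)
          = (Finset.univ.filter fun x : Fin s → F => ∀ i, x i ≠ 0).filter p := by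
      intro p _
      rw [Finset.filter_filter]
    rw [h1 (fun x => eval x g = 0), h1 (fun x => eval x g ≠ 0)]
    exact Finset.card_filter_add_card_filter_not (fun x => eval x g = 0)
  have hkey := key_nonzero_count s d hds g hg hsf (le_of_eq hdeg)
  have htor := torus_card (F := F) s
  rw [← htor, ← hsplit]
  exact Nat.le_sub_of_add_le (Nat.add_le_add_left hkey _)
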